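/- arXiv:2405.01404 — 2 statements merged into one kernel-verified Lean document; each statement's English description precedes it below -/
import Mathlib

section
/- Polar parameterisation theorem: for any bounded set A ⊂ ℝ^M and reference vector η ∈ ℝ^M such that the truncated interpolated weak Pareto front Y*_η[A] is nonempty, Y*_η[A] = {η + (sup_{a ∈ A} s_{η,λ}(a)) λ : λ ∈ S^{M−1}_+}, where s_{η,λ}(a) = min_m max(a^(m) − η^(m), 0)/λ^(m). -/
set_option linter.unusedSectionVars false

/-- The length scalarisation function `s_{η,λ}(y) = min_m max(y^(m) - η^(m), 0) / λ^(m)`. -/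
noncomputable def sLen {M : ℕ} (η lam y : EuclideanSpace ℝ (Fin M)) : ℝ :=
  ⨅ m, max (y m - η m) 0 / lam m

/-- The positive part of the unit sphere `S^{M-1}_+`. -/
def Splus (M : ℕ) : Set (EuclideanSpace ℝ (Fin M)) :=
  {z | (∀ m, 0 < z m) ∧ ‖z‖ = 1}

/-- The weak Pareto domination region `D_⪯[A]` of a set `A`. -/
def weakDom {M : ℕ} (A : Set (EuclideanSpace ℝ (Fin M))) : Set (EuclideanSpace ℝ (Fin M)) :=
  {y | ∃ a ∈ A, ∀ m, y m ≤ a m}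

/-- The truncated interpolated weak Pareto front `Y*_η[A]`: the points of `D_⪯[closure A]`
that are not strongly dominated by any point of `D_⪯[closure A]`, intersected with the
region strictly dominating `η`. -/
def truncFront {M : ℕ} (η : EuclideanSpace ℝ (Fin M)) (A : Set (EuclideanSpace ℝ (Fin M))) :
    Set (EuclideanSpace ℝ (Fin M)) :=
  {y ∈ weakDom (closure A) | ∀ z ∈ weakDom (closure A), ¬ ∀ m, y m < z m} ∩
    {y | ∀ m, η m < y m}

section aux
variable {M : ℕ} [Nonempty (Fin M)]

lemma sLen_le (η lam y : EuclideanSpace ℝ (Fin M)) (m : Fin M) :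
    sLen η lam y ≤ max (y m - η m) 0 / lam m :=
  ciInf_le (Set.Finite.bddBelow (Set.finite_range _)) m

lemma le_sLen {η lam y : EuclideanSpace ℝ (Fin M)} {c : ℝ}
    (h : ∀ m, c ≤ max (y m - η m) 0 / lam m) : c ≤ sLen η lam y := le_ciInf h

lemma lt_sLen {η lam y : EuclideanSpace ℝ (Fin M)} {c : ℝ}
    (h : ∀ m, c < max (y m - η m) 0 / lam m) : c < sLen η lam y := by
  obtain ⟨m0, hm0⟩ := Finite.exists_min (fun m => max (y m - η m) 0 / lam m)
  exact lt_of_lt_of_le (h m0) (le_ciInf hm0)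

lemma sLen_continuous (η lam : EuclideanSpace ℝ (Fin M)) : Continuous (sLen η lam) := by
  have h : sLen η lam = fun y =>
      Finset.univ.inf' Finset.univ_nonempty (fun m => max (y m - η m) 0 / lam m) := by
    funext y
    rw [Finset.inf'_univ_eq_ciInf]
    rfl
  rw [h]
  exact Continuous.finset_inf'_apply _ fun m _ =>
    (((EuclideanSpace.proj m).continuous.sub continuous_const).max continuous_const).div_const _

lemma exists_max {η lam : EuclideanSpace ℝ (Fin M)} {A : Set (EuclideanSpace ℝ (Fin M))}
    (hbdd : Bornology.IsBounded A) (hAne : A.Nonempty) :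
    ∃ c ∈ closure A, (∀ x ∈ closure A, sLen η lam x ≤ sLen η lam c) ∧
      (⨆ a : A, sLen η lam a) = sLen η lam c := by
  haveI := hAne.to_subtype
  obtain ⟨c, hc, hmax⟩ := hbdd.isCompact_closure.exists_isMaxOn hAne.closure
    (sLen_continuous η lam).continuousOn
  have hmax' : ∀ x ∈ closure A, sLen η lam x ≤ sLen η lam c := fun x hx => hmax hx
  refine ⟨c, hc, hmax', le_antisymm (ciSup_le fun a => hmax' a (subset_closure a.2)) ?_⟩
  have h1 : sLen η lam c ∈ closure (sLen η lam '' A) :=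
    image_closure_subset_closure_image (sLen_continuous η lam) ⟨c, hc, rfl⟩
  have h2 : sLen η lam '' A ⊆ Set.Iic (⨆ a : A, sLen η lam a) := by
    rintro _ ⟨a, ha, rfl⟩
    exact le_ciSup (f := fun a : A => sLen η lam a)
      ⟨sLen η lam c, by rintro _ ⟨b, rfl⟩; exact hmax' b (subset_closure b.2)⟩ ⟨a, ha⟩
  exact closure_minimal h2 isClosed_Iic h1

end aux

/-- polar parameterisation: for any bounded set `A ⊂ ℝ^M` whose truncated
interpolated weak Pareto front is nonempty,
`Y*_η[A] = {η + (sup_{a ∈ A} s_{η,λ}(a)) • λ : λ ∈ S^{M-1}_+}`. -/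
theorem stmt6 (M : ℕ) (hM : 1 ≤ M) (η : EuclideanSpace ℝ (Fin M))
    (A : Set (EuclideanSpace ℝ (Fin M))) (hbdd : Bornology.IsBounded A)
    (hne : (truncFront η A).Nonempty) :
    truncFront η A = {y | ∃ lam ∈ Splus M, y = η + (⨆ a : A, sLen η lam a) • lam} := by
  haveI : Nonempty (Fin M) := ⟨⟨0, hM⟩⟩
  obtain ⟨y0, ⟨⟨hy0dom, _⟩, hy0η⟩⟩ := hne
  obtain ⟨c0, hc0, hyc0⟩ := hy0dom
  have hAne : A.Nonempty := by rw [← closure_nonempty_iff]; exact ⟨c0, hc0⟩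
  ext y
  simp only [truncFront, Set.mem_inter_iff, Set.mem_sep_iff, Set.mem_setOf_eq, weakDom, Splus]
  constructor
  · rintro ⟨⟨hdom, hnd⟩, hη⟩
    set v : EuclideanSpace ℝ (Fin M) := y - η with hv
    have hvm : ∀ m, v m = y m - η m := fun m => rfl
    have hvpos : ∀ m, 0 < v m := fun m => sub_pos.2 (hη m)
    have hvne : v ≠ 0 := by
      intro h
      have h0 := hvpos ⟨0, hM⟩
      rw [h] at h0
      exact lt_irrefl 0 h0
    have hr : (0:ℝ) < ‖v‖ := norm_pos_iff.2 hvne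
    set lam : EuclideanSpace ℝ (Fin M) := ‖v‖⁻¹ • v with hlam
    have hlamm : ∀ m, lam m = ‖v‖⁻¹ * v m := fun m => rfl
    have hlampos : ∀ m, 0 < lam m := fun m => mul_pos (inv_pos.2 hr) (hvpos m)
    have hnormlam : ‖lam‖ = 1 := by
      rw [hlam, norm_smul, norm_inv, norm_norm, inv_mul_cancel₀ hr.ne']
    have hmul : ∀ m, ‖v‖ * lam m = v m := by
      intro m
      rw [hlamm m, ← mul_assoc, mul_inv_cancel₀ hr.ne', one_mul]
    obtain ⟨c, hc, hmax, hsup⟩ := exists_max (η := η) (lam := lam) hbdd hAne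
    have hsle : sLen η lam c ≤ ‖v‖ := by
      by_contra h
      push_neg at h
      refine hnd c ⟨c, hc, fun m => le_refl _⟩ (fun m => ?_)
      have h1 : ‖v‖ < max (c m - η m) 0 / lam m := lt_of_lt_of_le h (sLen_le η lam c m)
      have h2 : v m < max (c m - η m) 0 := by
        rw [← hmul m]; exact (lt_div_iff₀ (hlampos m)).1 h1
      have h3 : v m < c m - η m := by
        rcases lt_max_iff.1 h2 with h' | h'
        · exact h'
        · exact absurd h' (not_lt.2 (hvpos m).le)
      have := add_lt_add_left h3 (η m)
      rw [hvm m] at this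
      linarith
    have hsge : ‖v‖ ≤ sLen η lam c := by
      obtain ⟨d, hd, hyd⟩ := hdom
      refine le_trans (le_sLen fun m => ?_) (hmax d hd)
      rw [le_div_iff₀ (hlampos m), hmul m, hvm m]
      exact le_max_iff.2 (Or.inl (by linarith [hyd m]))
    have hσ : (⨆ a : A, sLen η lam a) = ‖v‖ := by rw [hsup]; exact le_antisymm hsle hsge
    refine ⟨lam, ⟨hlampos, hnormlam⟩, ?_⟩
    rw [hσ, hlam, smul_smul, mul_inv_cancel₀ hr.ne', one_smul, hv, add_sub_cancel]
  · rintro ⟨lam, ⟨hlampos, _⟩, rfl⟩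
    obtain ⟨c, hc, hmax, hsup⟩ := exists_max (η := η) (lam := lam) hbdd hAne
    set σ : ℝ := ⨆ a : A, sLen η lam a with hσ
    have hym : ∀ m, (η + σ • lam) m = η m + σ * lam m := fun m => rfl
    have hσpos : 0 < σ := by
      rw [hsup]
      refine lt_of_lt_of_le ?_ (hmax c0 hc0)
      refine lt_sLen fun m => ?_
      have h0 : 0 < c0 m - η m := by linarith [hyc0 m, hy0η m]
      exact div_pos (lt_max_iff.2 (Or.inl h0)) (hlampos m)
    have hηy : ∀ m, η m < (η + σ • lam) m := by
      intro m
      rw [hym m]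
      nlinarith [hlampos m]
    refine ⟨⟨⟨c, hc, fun m => ?_⟩, ?_⟩, hηy⟩
    · -- η m + σ * lam m ≤ c m
      have h1 : σ ≤ max (c m - η m) 0 / lam m := by
        rw [hsup]; exact sLen_le η lam c m
      have h2 : σ * lam m ≤ max (c m - η m) 0 := (le_div_iff₀ (hlampos m)).1 h1
      have h3 : σ * lam m ≤ c m - η m := by
        rcases le_max_iff.1 h2 with h' | h'
        · exact h'
        · nlinarith [hlampos m]
      rw [hym m]
      linarith
    · rintro z ⟨d, hd, hzd⟩ hlt
      have h4 : σ < sLen η lam d := by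
        refine lt_sLen fun m => ?_
        rw [lt_div_iff₀ (hlampos m)]
        have h5 := hlt m
        rw [hym m] at h5
        have h6 : σ * lam m < d m - η m := by linarith [hzd m]
        exact lt_max_iff.2 (Or.inl h6)
      rw [hsup] at h4
      exact absurd (hmax d hd) (not_le.2 h4)
end

section
/- If A* and B* are Pareto front surfaces with reference η, then the truncated interpolated weak Pareto front of their union is the polar surface with projected lengths equal to the pointwise maximum: Y*_η[A* ∪ B*] = {η + max(ℓ_{η,λ}[A*], ℓ_{η,λ}[B*]) λ : λ ∈ S^{M−1}_+}. -/
/-- `A` is a Pareto front surface with reference `η`: all its points strictly dominate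
`η` componentwise, each positive ray from `η` meets `A` exactly once, and no point of
`A` strongly dominates another. -/
def IsParetoFrontSurface {M : ℕ} (η : EuclideanSpace ℝ (Fin M))
    (A : Set (EuclideanSpace ℝ (Fin M))) : Prop :=
  (∀ a ∈ A, ∀ m, η m < a m) ∧
  (∀ lam ∈ Splus M, ∃! t : ℝ, 0 < t ∧ η + t • lam ∈ A) ∧
  (∀ a ∈ A, ∀ b ∈ A, ¬ ∀ m, a m < b m)

/-- The projected length `ℓ_{η,λ}[A]`. -/
noncomputable def projLen {M : ℕ} (η : EuclideanSpace ℝ (Fin M))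
    (A : Set (EuclideanSpace ℝ (Fin M))) (lam : EuclideanSpace ℝ (Fin M)) : ℝ :=
  sSup {t : ℝ | 0 < t ∧ η + t • lam ∈ A}

/-- No point of the closure of `A` strongly dominates a point of `A`. -/
lemma noClosureDom {M : ℕ} {A : Set (EuclideanSpace ℝ (Fin M))}
    (h3 : ∀ a ∈ A, ∀ b ∈ A, ¬ ∀ m, a m < b m) {a : EuclideanSpace ℝ (Fin M)} (ha : a ∈ A)
    {c : EuclideanSpace ℝ (Fin M)} (hc : c ∈ closure A) : ¬ ∀ m, a m < c m := by
  intro hlt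
  have hU : IsOpen {x : EuclideanSpace ℝ (Fin M) | ∀ m, a m < x m} := by
    have : {x : EuclideanSpace ℝ (Fin M) | ∀ m, a m < x m}
        = ⋂ m, (fun x : EuclideanSpace ℝ (Fin M) => x m) ⁻¹' (Set.Ioi (a m)) := by
      ext x; simp [Set.mem_iInter]
    rw [this]
    exact isOpen_iInter_of_finite fun m => (isOpen_Ioi).preimage (PiLp.continuous_apply 2 _ m)
  obtain ⟨b, hbU, hbA⟩ := (mem_closure_iff.mp hc) _ hU hlt
  exact h3 a ha b hbA hbU

lemma projLen_spec {M : ℕ} {η : EuclideanSpace ℝ (Fin M)} {A : Set (EuclideanSpace ℝ (Fin M))}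
    (hA : IsParetoFrontSurface η A) {lam : EuclideanSpace ℝ (Fin M)} (hlam : lam ∈ Splus M) :
    0 < projLen η A lam ∧ η + projLen η A lam • lam ∈ A ∧
      ∀ s : ℝ, 0 < s → η + s • lam ∈ A → s = projLen η A lam := by
  obtain ⟨t, ⟨ht0, htA⟩, huniq⟩ := hA.2.1 lam hlam
  have hset : {s : ℝ | 0 < s ∧ η + s • lam ∈ A} = {t} :=
    Set.eq_singleton_iff_unique_mem.mpr ⟨⟨ht0, htA⟩, fun s hs => huniq s hs⟩
  have hval : projLen η A lam = t := by
    unfold projLen; rw [hset, csSup_singleton]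
  rw [hval]
  exact ⟨ht0, htA, fun s hs0 hsA => huniq s ⟨hs0, hsA⟩⟩

/-- union: the truncated interpolated weak Pareto front of the union of two
Pareto front surfaces is the polar surface whose projected lengths are the pointwise
maximum of the two projected length functions. -/
theorem stmt8 (M : ℕ) (hM : 1 ≤ M) (η : EuclideanSpace ℝ (Fin M))
    (A B : Set (EuclideanSpace ℝ (Fin M)))
    (hA : IsParetoFrontSurface η A) (hB : IsParetoFrontSurface η B) :
    truncFront η (A ∪ B) =
      {y | ∃ lam ∈ Splus M, y = η + max (projLen η A lam) (projLen η B lam) • lam} := by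
  ext y
  simp only [truncFront, weakDom, Set.mem_inter_iff, Set.mem_setOf_eq, Set.mem_sep_iff,
    closure_union, Set.mem_union]
  constructor
  · rintro ⟨⟨⟨c, hc, hyc⟩, hmax⟩, hyη⟩
    -- decompose y into a ray from η
    have hyne : y - η ≠ 0 := by
      intro h
      have := hyη ⟨0, hM⟩
      have h0 : (y - η) ⟨0, hM⟩ = 0 := by rw [h]; rfl
      have : y ⟨0, hM⟩ - η ⟨0, hM⟩ = 0 := h0
      linarith
    set t : ℝ := ‖y - η‖ with ht_def
    have ht0 : 0 < t := norm_pos_iff.mpr hyne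
    set lam : EuclideanSpace ℝ (Fin M) := t⁻¹ • (y - η) with hlam_def
    have hlam_apply : ∀ m, lam m = t⁻¹ * (y m - η m) := fun m => rfl
    have hlampos : ∀ m, 0 < lam m := fun m => by
      rw [hlam_apply m]
      exact mul_pos (inv_pos.mpr ht0) (sub_pos.mpr (hyη m))
    have hlamnorm : ‖lam‖ = 1 := by
      rw [hlam_def, norm_smul, Real.norm_eq_abs, abs_inv, abs_of_pos ht0, ← ht_def]
      field_simp
    have hlamS : lam ∈ Splus M := ⟨hlampos, hlamnorm⟩
    have hy : y = η + t • lam := by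
      rw [hlam_def, smul_smul, mul_inv_cancel₀ (ne_of_gt ht0), one_smul]
      abel
    obtain ⟨htA0, htAA, htAu⟩ := projLen_spec hA hlamS
    obtain ⟨htB0, htBB, htBu⟩ := projLen_spec hB hlamS
    set m0 : ℝ := max (projLen η A lam) (projLen η B lam) with hm0_def
    have hp : η + m0 • lam ∈ A ∪ B := by
      rcases max_choice (projLen η A lam) (projLen η B lam) with h | h
      · left; rw [hm0_def, h]; exact htAA
      · right; rw [hm0_def, h]; exact htBB
    have htm0 : t = m0 := by
      rcases lt_trichotomy t m0 with h | h | h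
      · exfalso
        refine hmax (η + m0 • lam) ⟨η + m0 • lam, ?_, fun m => le_refl _⟩ ?_
        · rcases hp with hp | hp
          · exact Or.inl (subset_closure hp)
          · exact Or.inr (subset_closure hp)
        · intro m
          have : (η + m0 • lam) m = η m + m0 * lam m := rfl
          rw [this, hy]
          have : (η + t • lam) m = η m + t * lam m := rfl
          rw [this]
          have := hlampos m
          nlinarith
      · exact h
      · exfalso
        have htA' : projLen η A lam < t := lt_of_le_of_lt (le_max_left _ _) h
        have htB' : projLen η B lam < t := lt_of_le_of_lt (le_max_right _ _) h
        rcases hc with hc | hc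
        · refine noClosureDom hA.2.2 htAA hc ?_
          intro m
          have h1 : (η + projLen η A lam • lam) m = η m + projLen η A lam * lam m := rfl
          have h2 : y m = η m + t * lam m := by rw [hy]; rfl
          have h3 := hyc m
          have := hlampos m
          rw [h1]; rw [h2] at h3; nlinarith
        · refine noClosureDom hB.2.2 htBB hc ?_
          intro m
          have h1 : (η + projLen η B lam • lam) m = η m + projLen η B lam * lam m := rfl
          have h2 : y m = η m + t * lam m := by rw [hy]; rfl
          have h3 := hyc m
          have := hlampos m
          rw [h1]; rw [h2] at h3; nlinarith
    exact ⟨lam, hlamS, by rw [hy, htm0]⟩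
  · rintro ⟨lam, hlamS, hy⟩
    have hlampos := hlamS.1
    obtain ⟨htA0, htAA, htAu⟩ := projLen_spec hA hlamS
    obtain ⟨htB0, htBB, htBu⟩ := projLen_spec hB hlamS
    set m0 : ℝ := max (projLen η A lam) (projLen η B lam) with hm0_def
    have hm00 : 0 < m0 := lt_of_lt_of_le htA0 (le_max_left _ _)
    have hyAB : y ∈ A ∪ B := by
      rcases max_choice (projLen η A lam) (projLen η B lam) with h | h
      · left; rw [hy, hm0_def, h]; exact htAA
      · right; rw [hy, hm0_def, h]; exact htBB
    have hy_apply : ∀ m, y m = η m + m0 * lam m := fun m => by rw [hy]; rfl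
    refine ⟨⟨⟨y, ?_, fun m => le_refl _⟩, ?_⟩, fun m => ?_⟩
    · rcases hyAB with h | h
      · exact Or.inl (subset_closure h)
      · exact Or.inr (subset_closure h)
    · rintro z ⟨c, hc, hzc⟩ hlt
      rcases hc with hc | hc
      · refine noClosureDom hA.2.2 htAA hc ?_
        intro m
        have h1 : (η + projLen η A lam • lam) m = η m + projLen η A lam * lam m := rfl
        have h2 := hy_apply m
        have h3 := hlt m
        have h4 := hzc m
        have h5 : projLen η A lam ≤ m0 := le_max_left _ _
        have := hlampos m
        rw [h1]; nlinarith
      · refine noClosureDom hB.2.2 htBB hc ?_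
        intro m
        have h1 : (η + projLen η B lam • lam) m = η m + projLen η B lam * lam m := rfl
        have h2 := hy_apply m
        have h3 := hlt m
        have h4 := hzc m
        have h5 : projLen η B lam ≤ m0 := le_max_right _ _
        have := hlampos m
        rw [h1]; nlinarith
    · rw [hy_apply m]
      have := hlampos m
      nlinarith
end
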